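/- Let ℓ ∈ F_q[X0,X1,X2] be a nonzero linear form dividing C, and let Q ∈ F_q[X0,X1,X2] be an irreducible factor of C with deg Q ≥ 2. Then there is no point (x0 : x1 : x2) ∈ ℙ²(F_q) with ℓ(x0, x1, x2) = 0 and Q(x0, x1, x2) = 0; that is, the union of the linear components of the curve C = 0 is F_q-disjoint from its remaining components. -/

import Mathlib

open MvPolynomial

/-- The polynomial `C = X0^d + X1^d + X2^d + (e0·X0 + e1·X1 + e2·X2)^d` over `F_q`. -/
noncomputable def fermatSlice (F : Type) [Field F] (d : ℕ) (e0 e1 e2 : F) :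
    MvPolynomial (Fin 3) F :=
  X 0 ^ d + X 1 ^ d + X 2 ^ d +
    (MvPolynomial.C e0 * X 0 + MvPolynomial.C e1 * X 1 + MvPolynomial.C e2 * X 2) ^ d

set_option linter.unusedSectionVars false
set_option linter.unnecessarySimpa false
set_option linter.unusedTactic false
set_option linter.unreachableTactic false




variable {F : Type} [Field F]

/-- substitution endomorphism sending `X i ↦ C a * X j`, identity on other variables -/
noncomputable def lsub (i j : Fin 3) (a : F) :
    MvPolynomial (Fin 3) F →ₐ[F] MvPolynomial (Fin 3) F :=
  aeval (fun k => if k = i then C a * X j else X k)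

lemma lsub_X_self (i j : Fin 3) (a : F) : lsub i j a (X i) = C a * X j := by
  simp [lsub]

lemma lsub_X_ne (i j : Fin 3) (a : F) {k : Fin 3} (h : k ≠ i) : lsub i j a (X k) = X k := by
  simp [lsub, h]

lemma lsub_C (i j : Fin 3) (a c : F) : lsub i j a (C c) = C c := by
  simp [lsub]

lemma lsub_dvd_sub (i j : Fin 3) (a : F) (P : MvPolynomial (Fin 3) F) :
    (X i - C a * X j) ∣ (P - lsub i j a P) := by
  induction P using MvPolynomial.induction_on with
  | C c => simp [lsub_C]
  | add p q hp hq =>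
      have := dvd_add hp hq
      rw [map_add]
      convert this using 1
      ring
  | mul_X p k hp =>
      have hrw : p * X k - lsub i j a (p * X k)
          = (p - lsub i j a p) * X k + lsub i j a p * (X k - lsub i j a (X k)) := by
        rw [map_mul]; ring
      rw [hrw]
      refine dvd_add (hp.mul_right _) (Dvd.dvd.mul_left ?_ _)
      rcases eq_or_ne k i with rfl | hk
      · rw [lsub_X_self]
      · rw [lsub_X_ne _ _ _ hk, sub_self]
        exact dvd_zero _

lemma lsub_line {i j : Fin 3} (hij : i ≠ j) (a : F) :
    lsub i j a (X i - C a * X j) = 0 := by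
  rw [map_sub, lsub_X_self, map_mul, lsub_C, lsub_X_ne i j a hij.symm, sub_self]

lemma lsub_dvd_iff {i j : Fin 3} (hij : i ≠ j) (a : F) {P : MvPolynomial (Fin 3) F} :
    (X i - C a * X j) ∣ P ↔ lsub i j a P = 0 := by
  constructor
  · rintro ⟨B, rfl⟩
    rw [map_mul, lsub_line hij, zero_mul]
  · intro h
    have := lsub_dvd_sub i j a P
    rwa [h, sub_zero] at this

lemma line_ne_zero {i j : Fin 3} (hij : i ≠ j) (a : F) :
    (X i - C a * X j : MvPolynomial (Fin 3) F) ≠ 0 := by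
  intro h
  have := congrArg (eval (Pi.single i 1)) h
  simp [Pi.single_apply, hij.symm] at this

lemma line_prime {i j : Fin 3} (hij : i ≠ j) (a : F) :
    Prime (X i - C a * X j : MvPolynomial (Fin 3) F) := by
  refine ⟨line_ne_zero hij a, ?_, ?_⟩
  · intro hu
    have h1 : (X i - C a * X j : MvPolynomial (Fin 3) F) ∣ 1 := hu.dvd
    rw [lsub_dvd_iff hij] at h1
    simp at h1
  · intro b c hbc
    rw [lsub_dvd_iff hij] at hbc ⊢
    rw [lsub_dvd_iff hij]
    rw [map_mul] at hbc
    exact mul_eq_zero.mp hbc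

lemma line_irred {i j : Fin 3} (hij : i ≠ j) (a : F) :
    Irreducible (X i - C a * X j : MvPolynomial (Fin 3) F) :=
  (line_prime hij a).irreducible

lemma line_isHomogeneous {i j : Fin 3} (a : F) :
    (X i - C a * X j : MvPolynomial (Fin 3) F).IsHomogeneous 1 := by
  apply MvPolynomial.IsHomogeneous.sub (isHomogeneous_X F i)
  simpa using MvPolynomial.IsHomogeneous.C_mul (isHomogeneous_X F j) a

lemma line_totalDegree {i j : Fin 3} (hij : i ≠ j) (a : F) :
    (X i - C a * X j : MvPolynomial (Fin 3) F).totalDegree = 1 :=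
  (line_isHomogeneous a).totalDegree (line_ne_zero hij a)

variable {F : Type} [Field F]

lemma isUnit_const {n : ℕ} (u : MvPolynomial (Fin n) F) (h : IsUnit u) :
    ∃ c : F, u = C c := by
  induction n with
  | zero => exact (MvPolynomial.C_surjective (Fin 0) u).imp fun c hc => hc.symm
  | succ n ih =>
      set e := MvPolynomial.finSuccEquiv F n with he
      have hu : IsUnit (e u) := h.map e.toAlgHom
      have hdeg : (e u).natDegree = 0 := Polynomial.natDegree_eq_zero_of_isUnit hu
      obtain ⟨r, hr⟩ := Polynomial.natDegree_eq_zero.mp hdeg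
      have hru : IsUnit r := by
        rw [← Polynomial.isUnit_C, hr]; exact hu
      obtain ⟨c, rfl⟩ := ih r hru
      refine ⟨c, ?_⟩
      have hC : e (C c) = Polynomial.C (C c) := by
        rw [he, MvPolynomial.finSuccEquiv_apply]
        simp
      exact e.injective (by rw [hC, hr])
variable {F : Type} [Field F] [Fintype F] {d : ℕ}

lemma pow2d (hq : Fintype.card F = 2*d+1) {x : F} (hx : x ≠ 0) : x ^ (2*d) = 1 := by
  have := FiniteField.pow_card_sub_one_eq_one x hx
  rwa [hq, Nat.add_sub_cancel] at this

lemma eta_pm (hq : Fintype.card F = 2*d+1) {x : F} (hx : x ≠ 0) :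
    x ^ d = 1 ∨ x ^ d = -1 := by
  have h := pow2d hq hx
  rw [two_mul, pow_add] at h
  have h2 : (x ^ d - 1) * (x ^ d + 1) = 0 := by linear_combination h
  rcases mul_eq_zero.mp h2 with h | h
  · left; linear_combination h
  · right; linear_combination h

noncomputable def etaZ (d : ℕ) (x : F) : ℤ :=
  letI := Classical.dec (x = 0)
  letI := Classical.dec (x ^ d = 1)
  if x = 0 then 0 else if x ^ d = 1 then 1 else -1

lemma etaZ_of_one {x : F} (hx : x ≠ 0) (h : x ^ d = 1) : etaZ d x = 1 := by
  classical
  simp [etaZ, hx, h]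

lemma etaZ_of_neg_one (hne : (-1 : F) ≠ 1) {x : F} (hx : x ≠ 0) (h : x ^ d = -1) :
    etaZ d x = -1 := by
  classical
  rw [etaZ]
  rw [if_neg hx, if_neg (by rw [h]; exact hne)]

lemma etaZ_cast (hq : Fintype.card F = 2*d+1) (hd0 : d ≠ 0) (hne : (-1 : F) ≠ 1) (x : F) :
    ((etaZ d x : ℤ) : F) = x ^ d := by
  classical
  rcases eq_or_ne x 0 with rfl | hx
  · simp [etaZ, zero_pow hd0]
  rcases eta_pm hq hx with h | h
  · rw [etaZ_of_one hx h, h]; simp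
  · rw [etaZ_of_neg_one hne hx h, h]; simp

lemma etaZ_zero : etaZ d (0 : F) = 0 := by simp [etaZ]

lemma etaZ_one : etaZ d (1 : F) = 1 := by simp [etaZ]

lemma etaZ_range (x : F) : etaZ d x = 0 ∨ etaZ d x = 1 ∨ etaZ d x = -1 := by
  classical
  unfold etaZ
  split_ifs <;> simp

lemma etaZ_eq_zero_iff (hq : Fintype.card F = 2*d+1) (hne : (-1 : F) ≠ 1) {x : F} :
    etaZ d x = 0 ↔ x = 0 := by
  constructor
  · intro h
    by_contra hx
    rcases eta_pm hq hx with h1 | h1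
    · rw [etaZ_of_one hx h1] at h; omega
    · rw [etaZ_of_neg_one hne hx h1] at h; omega
  · rintro rfl; exact etaZ_zero

/-- The key combinatorial lemma about sums of quadratic characters of four binary
linear forms, two of which are the coordinates themselves. -/
lemma binlemma (hq : Fintype.card F = 2*d+1) (hne : (-1 : F) ≠ 1)
    {α3 β3 α4 β4 : F}
    (H : ∀ s t : F, etaZ d s + etaZ d t + etaZ d (α3*s + β3*t) + etaZ d (α4*s + β4*t) = 0) :
    (β3 = 0 ∧ α4 = 0 ∧ etaZ d α3 = -1 ∧ etaZ d β4 = -1) ∨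
    (α3 = 0 ∧ β4 = 0 ∧ etaZ d β3 = -1 ∧ etaZ d α4 = -1) := by
  have h10 := H 1 0
  have h01 := H 0 1
  have h11 := H 1 1
  rw [etaZ_one] at h10 h01 h11
  rw [etaZ_zero] at h10 h01
  simp only [mul_one, mul_zero, add_zero, zero_add] at h10 h01 h11
  -- h10 : 1 + 0 + etaZ α3 + etaZ α4 = 0, etc.
  rcases etaZ_range (d := d) α3 with hα3 | hα3 | hα3 <;>
  rcases etaZ_range (d := d) α4 with hα4 | hα4 | hα4 <;>
  rcases etaZ_range (d := d) β3 with hβ3 | hβ3 | hβ3 <;>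
  rcases etaZ_range (d := d) β4 with hβ4 | hβ4 | hβ4 <;>
  first
  | omega
  | (left
     refine ⟨(etaZ_eq_zero_iff hq hne).mp ?_, (etaZ_eq_zero_iff hq hne).mp ?_, ?_, ?_⟩ <;> omega)
  | (right
     refine ⟨(etaZ_eq_zero_iff hq hne).mp ?_, (etaZ_eq_zero_iff hq hne).mp ?_, ?_, ?_⟩ <;> omega)
  | (exfalso
     have hz3 : α3 = 0 := (etaZ_eq_zero_iff hq hne).mp (by omega)
     have hz3' : β3 = 0 := (etaZ_eq_zero_iff hq hne).mp (by omega)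
     rw [hz3, hz3'] at h11
     simp only [zero_mul, add_zero, zero_add, etaZ_zero] at h11
     rcases etaZ_range (d := d) (α4 + β4) with hr | hr | hr <;> omega)
  | (exfalso
     have hz4 : α4 = 0 := (etaZ_eq_zero_iff hq hne).mp (by omega)
     have hz4' : β4 = 0 := (etaZ_eq_zero_iff hq hne).mp (by omega)
     rw [hz4, hz4'] at h11
     simp only [zero_mul, add_zero, zero_add, etaZ_zero] at h11
     rcases etaZ_range (d := d) (α3 + β3) with hr | hr | hr <;> omega)

variable {F : Type} [Field F]

lemma deg1_cases (m : Fin 3 →₀ ℕ) (h : m.degree = 1) :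
    m = Finsupp.single 0 1 ∨ m = Finsupp.single 1 1 ∨ m = Finsupp.single 2 1 := by
  have hsum : m 0 + m 1 + m 2 = 1 := by
    have : m.degree = ∑ i : Fin 3, m i := by
      rw [Finsupp.degree]
      exact Finset.sum_subset (Finset.subset_univ _)
        (fun x _ hx => Finsupp.notMem_support_iff.mp hx)
    rw [this, Fin.sum_univ_three] at h
    exact h
  rcases Nat.lt_or_ge (m 0) 1 with h0 | h0
  · rcases Nat.lt_or_ge (m 1) 1 with h1 | h1
    · right; right
      have : m 2 = 1 := by omega
      ext a; fin_cases a <;> simp [Finsupp.single_apply] <;> omega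
    · right; left
      ext a; fin_cases a <;> simp [Finsupp.single_apply] <;> omega
  · left
    ext a; fin_cases a <;> simp [Finsupp.single_apply] <;> omega

lemma linrep {ℓ : MvPolynomial (Fin 3) F} (hlin : ℓ.IsHomogeneous 1) :
    ℓ = C (coeff (Finsupp.single 0 1) ℓ) * X 0 + C (coeff (Finsupp.single 1 1) ℓ) * X 1
      + C (coeff (Finsupp.single 2 1) ℓ) * X 2 := by
  apply MvPolynomial.ext
  intro m
  classical
  by_cases hdeg : m.degree = 1
  · rcases deg1_cases m hdeg with rfl | rfl | rfl <;>
      simp [coeff_C_mul, coeff_X', Finsupp.single_eq_single_iff]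
  · rw [hlin.coeff_eq_zero hdeg]
    have h0 : m ≠ Finsupp.single 0 1 := by
      rintro rfl; exact hdeg (by rw [Finsupp.degree_apply, Finsupp.support_single_ne_zero _ one_ne_zero]; simp)
    have h1 : m ≠ Finsupp.single 1 1 := by
      rintro rfl; exact hdeg (by rw [Finsupp.degree_apply, Finsupp.support_single_ne_zero _ one_ne_zero]; simp)
    have h2 : m ≠ Finsupp.single 2 1 := by
      rintro rfl; exact hdeg (by rw [Finsupp.degree_apply, Finsupp.support_single_ne_zero _ one_ne_zero]; simp)
    simp [coeff_C_mul, coeff_X', Ne.symm h0, Ne.symm h1, Ne.symm h2]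
namespace S8
variable {F : Type} [Field F] [Fintype F] {d : ℕ}

lemma etaZ_pow_neg_one (hq : Fintype.card F = 2*d+1) (hd0 : d ≠ 0) (hne : (-1:F) ≠ 1)
    {x : F} (h : etaZ d x = -1) : x ^ d = -1 := by
  have := etaZ_cast hq hd0 hne x
  rw [h] at this
  push_cast at this
  exact this.symm

lemma fermat_eval (e0 e1 e2 : F) (v : Fin 3 → F) :
    eval v (fermatSlice F d e0 e1 e2)
      = (v 0)^d + (v 1)^d + (v 2)^d + (e0 * v 0 + e1 * v 1 + e2 * v 2)^d := by
  simp [fermatSlice]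

lemma classify (hq : Fintype.card F = 2*d+1) (hd0 : d ≠ 0) (hne : (-1:F) ≠ 1)
    (hch : ∀ n : ℤ, n.natAbs ≤ 4 → (n:F) = 0 → n = 0)
    (e : Fin 3 → F) {ℓ : MvPolynomial (Fin 3) F} (hl0 : ℓ ≠ 0) (hlin : ℓ.IsHomogeneous 1)
    (hldvd : ℓ ∣ fermatSlice F d (e 0) (e 1) (e 2)) :
    ∃ (i j k : Fin 3) (c u : F), i ≠ j ∧ i ≠ k ∧ j ≠ k ∧ u ≠ 0 ∧
      ℓ = C u * (X i - C c * X j) ∧ c^d = -1 ∧ e j = -(c * e i) ∧ (e k)^d = -1 := by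
  obtain ⟨M, hM⟩ := hldvd
  have hpoint : ∀ v : Fin 3 → F, eval v ℓ = 0 →
      etaZ d (v 0) + etaZ d (v 1) + etaZ d (v 2)
        + etaZ d (e 0 * v 0 + e 1 * v 1 + e 2 * v 2) = 0 := by
    intro v hv
    have hF : (v 0)^d + (v 1)^d + (v 2)^d + (e 0 * v 0 + e 1 * v 1 + e 2 * v 2)^d = 0 := by
      rw [← fermat_eval, hM, map_mul, hv, zero_mul]
    have hcast : (((etaZ d (v 0) + etaZ d (v 1) + etaZ d (v 2)
        + etaZ d (e 0 * v 0 + e 1 * v 1 + e 2 * v 2) : ℤ)) : F) = 0 := by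
      push_cast [etaZ_cast hq hd0 hne]
      linear_combination hF
    refine hch _ ?_ hcast
    rcases etaZ_range (d := d) (v 0) with h0 | h0 | h0 <;>
      rcases etaZ_range (d := d) (v 1) with h1 | h1 | h1 <;>
        rcases etaZ_range (d := d) (v 2) with h2 | h2 | h2 <;>
          rcases etaZ_range (d := d) (e 0 * v 0 + e 1 * v 1 + e 2 * v 2) with h3 | h3 | h3 <;>
            omega
  set a0 := coeff (Finsupp.single 0 1) ℓ with ha0def
  set a1 := coeff (Finsupp.single 1 1) ℓ with ha1def
  set a2 := coeff (Finsupp.single 2 1) ℓ with ha2def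
  have hrep := linrep hlin
  rw [← ha0def, ← ha1def, ← ha2def] at hrep
  have hA : a0 ≠ 0 ∨ a1 ≠ 0 ∨ a2 ≠ 0 := by
    by_contra hall
    push_neg at hall
    obtain ⟨h0, h1, h2⟩ := hall
    exact hl0 (by rw [hrep, h0, h1, h2]; simp)
  rcases hA with ha | ha | ha
  · -- a0 ≠ 0
    set α3 := -(a1/a0) with hα3
    set β3 := -(a2/a0) with hβ3
    set α4 := e 0 * α3 + e 1 with hα4
    set β4 := e 0 * β3 + e 2 with hβ4
    have H : ∀ s t : F,
        etaZ d s + etaZ d t + etaZ d (α3*s + β3*t) + etaZ d (α4*s + β4*t) = 0 := by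
      intro s t
      have hv := hpoint ![α3*s + β3*t, s, t] ?_
      · simp only [Matrix.cons_val_zero, Matrix.cons_val_one, Matrix.head_cons,
          Matrix.cons_val_two, Matrix.tail_cons] at hv
        have harg : e 0 * (α3*s + β3*t) + e 1 * s + e 2 * t = α4*s + β4*t := by
          rw [hα4, hβ4]; ring
        rw [harg] at hv
        omega
      · rw [hrep]
        simp only [map_add, eval_mul, eval_C, eval_X, Matrix.cons_val_zero,
          Matrix.cons_val_one, Matrix.head_cons, Matrix.cons_val_two, Matrix.tail_cons]
        rw [hα3, hβ3]
        field_simp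
        ring
    rcases binlemma hq hne H with ⟨hb3, hb4, hc, hk⟩ | ⟨hb3, hb4, hc, hk⟩
    · -- pair (0,1), k = 2
      have ha2 : a2 = 0 := by
        have := hb3
        rw [hβ3, neg_eq_zero, div_eq_zero_iff] at this
        tauto
      have ha1 : a1 = -(α3 * a0) := by rw [hα3]; field_simp
      refine ⟨0, 1, 2, α3, a0, by decide, by decide, by decide, ha, ?_, ?_, ?_, ?_⟩
      · rw [hrep, ha1, ha2]; simp only [map_neg, map_mul, map_zero]; ring
      · exact etaZ_pow_neg_one hq hd0 hne hc
      · rw [hα4] at hb4; linear_combination hb4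
      · have hβ42 : β4 = e 2 := by rw [hβ4, hb3]; ring
        rw [hβ42] at hk
        exact etaZ_pow_neg_one hq hd0 hne hk
    · -- pair (0,2), k = 1
      have ha1 : a1 = 0 := by
        have := hb3
        rw [hα3, neg_eq_zero, div_eq_zero_iff] at this
        tauto
      have ha2 : a2 = -(β3 * a0) := by rw [hβ3]; field_simp
      refine ⟨0, 2, 1, β3, a0, by decide, by decide, by decide, ha, ?_, ?_, ?_, ?_⟩
      · rw [hrep, ha1, ha2]; simp only [map_neg, map_mul, map_zero]; ring
      · exact etaZ_pow_neg_one hq hd0 hne hc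
      · rw [hβ4] at hb4; linear_combination hb4
      · have hα42 : α4 = e 1 := by rw [hα4, hb3]; ring
        rw [hα42] at hk
        exact etaZ_pow_neg_one hq hd0 hne hk
  · -- a1 ≠ 0
    set α3 := -(a0/a1) with hα3
    set β3 := -(a2/a1) with hβ3
    set α4 := e 1 * α3 + e 0 with hα4
    set β4 := e 1 * β3 + e 2 with hβ4
    have H : ∀ s t : F,
        etaZ d s + etaZ d t + etaZ d (α3*s + β3*t) + etaZ d (α4*s + β4*t) = 0 := by
      intro s t
      have hv := hpoint ![s, α3*s + β3*t, t] ?_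
      · simp only [Matrix.cons_val_zero, Matrix.cons_val_one, Matrix.head_cons,
          Matrix.cons_val_two, Matrix.tail_cons] at hv
        have harg : e 0 * s + e 1 * (α3*s + β3*t) + e 2 * t = α4*s + β4*t := by
          rw [hα4, hβ4]; ring
        rw [harg] at hv
        omega
      · rw [hrep]
        simp only [map_add, eval_mul, eval_C, eval_X, Matrix.cons_val_zero,
          Matrix.cons_val_one, Matrix.head_cons, Matrix.cons_val_two, Matrix.tail_cons]
        rw [hα3, hβ3]
        field_simp
        ring
    rcases binlemma hq hne H with ⟨hb3, hb4, hc, hk⟩ | ⟨hb3, hb4, hc, hk⟩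
    · -- pair (1,0), k = 2
      have ha2 : a2 = 0 := by
        have := hb3
        rw [hβ3, neg_eq_zero, div_eq_zero_iff] at this
        tauto
      have ha0 : a0 = -(α3 * a1) := by rw [hα3]; field_simp
      refine ⟨1, 0, 2, α3, a1, by decide, by decide, by decide, ha, ?_, ?_, ?_, ?_⟩
      · rw [hrep, ha0, ha2]; simp only [map_neg, map_mul, map_zero]; ring
      · exact etaZ_pow_neg_one hq hd0 hne hc
      · rw [hα4] at hb4; linear_combination hb4
      · have hβ42 : β4 = e 2 := by rw [hβ4, hb3]; ring
        rw [hβ42] at hk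
        exact etaZ_pow_neg_one hq hd0 hne hk
    · -- pair (1,2), k = 0
      have ha0 : a0 = 0 := by
        have := hb3
        rw [hα3, neg_eq_zero, div_eq_zero_iff] at this
        tauto
      have ha2 : a2 = -(β3 * a1) := by rw [hβ3]; field_simp
      refine ⟨1, 2, 0, β3, a1, by decide, by decide, by decide, ha, ?_, ?_, ?_, ?_⟩
      · rw [hrep, ha0, ha2]; simp only [map_neg, map_mul, map_zero]; ring
      · exact etaZ_pow_neg_one hq hd0 hne hc
      · rw [hβ4] at hb4; linear_combination hb4
      · have hα42 : α4 = e 0 := by rw [hα4, hb3]; ring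
        rw [hα42] at hk
        exact etaZ_pow_neg_one hq hd0 hne hk
  · -- a2 ≠ 0
    set α3 := -(a0/a2) with hα3
    set β3 := -(a1/a2) with hβ3
    set α4 := e 2 * α3 + e 0 with hα4
    set β4 := e 2 * β3 + e 1 with hβ4
    have H : ∀ s t : F,
        etaZ d s + etaZ d t + etaZ d (α3*s + β3*t) + etaZ d (α4*s + β4*t) = 0 := by
      intro s t
      have hv := hpoint ![s, t, α3*s + β3*t] ?_
      · simp only [Matrix.cons_val_zero, Matrix.cons_val_one, Matrix.head_cons,
          Matrix.cons_val_two, Matrix.tail_cons] at hv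
        have harg : e 0 * s + e 1 * t + e 2 * (α3*s + β3*t) = α4*s + β4*t := by
          rw [hα4, hβ4]; ring
        rw [harg] at hv
        omega
      · rw [hrep]
        simp only [map_add, eval_mul, eval_C, eval_X, Matrix.cons_val_zero,
          Matrix.cons_val_one, Matrix.head_cons, Matrix.cons_val_two, Matrix.tail_cons]
        rw [hα3, hβ3]
        field_simp
        ring
    rcases binlemma hq hne H with ⟨hb3, hb4, hc, hk⟩ | ⟨hb3, hb4, hc, hk⟩
    · -- pair (2,0), k = 1
      have ha1 : a1 = 0 := by
        have := hb3
        rw [hβ3, neg_eq_zero, div_eq_zero_iff] at this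
        tauto
      have ha0 : a0 = -(α3 * a2) := by rw [hα3]; field_simp
      refine ⟨2, 0, 1, α3, a2, by decide, by decide, by decide, ha, ?_, ?_, ?_, ?_⟩
      · rw [hrep, ha0, ha1]; simp only [map_neg, map_mul, map_zero]; ring
      · exact etaZ_pow_neg_one hq hd0 hne hc
      · rw [hα4] at hb4; linear_combination hb4
      · have hβ42 : β4 = e 1 := by rw [hβ4, hb3]; ring
        rw [hβ42] at hk
        exact etaZ_pow_neg_one hq hd0 hne hk
    · -- pair (2,1), k = 0
      have ha0 : a0 = 0 := by
        have := hb3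
        rw [hα3, neg_eq_zero, div_eq_zero_iff] at this
        tauto
      have ha1 : a1 = -(β3 * a2) := by rw [hβ3]; field_simp
      refine ⟨2, 1, 0, β3, a2, by decide, by decide, by decide, ha, ?_, ?_, ?_, ?_⟩
      · rw [hrep, ha0, ha1]; simp only [map_neg, map_mul, map_zero]; ring
      · exact etaZ_pow_neg_one hq hd0 hne hc
      · rw [hβ4] at hb4; linear_combination hb4
      · have hα42 : α4 = e 0 := by rw [hα4, hb3]; ring
        rw [hα42] at hk
        exact etaZ_pow_neg_one hq hd0 hne hk
end S8
namespace S8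
variable {F : Type} [Field F] [Fintype F] {d : ℕ}

omit [Fintype F] in
lemma dvd_line_totalDegree {i j : Fin 3} (hij : i ≠ j) (a : F) {P : MvPolynomial (Fin 3) F}
    (hP : ¬ IsUnit P) (h : P ∣ (X i - C a * X j)) : P.totalDegree = 1 := by
  obtain ⟨w, hw⟩ := h
  rcases (line_irred hij a).isUnit_or_isUnit hw with hu | hu
  · exact absurd hu hP
  obtain ⟨cc, rfl⟩ := isUnit_const w hu
  have hcc : cc ≠ 0 := by
    rintro rfl
    simp only [map_zero] at hu
    exact (not_isUnit_zero hu)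
  have hPel : P = C cc⁻¹ * (X i - C a * X j) := by
    rw [hw]
    rw [mul_comm P, ← mul_assoc, ← map_mul]
    rw [inv_mul_cancel₀ hcc]
    simp
  have hPne : P ≠ 0 := by
    intro h0
    rw [h0, zero_mul] at hw
    exact line_ne_zero hij a hw
  rw [hPel] at hPne ⊢
  exact ((line_isHomogeneous a).C_mul cc⁻¹).totalDegree hPne

omit [Fintype F] in
lemma prod_lines_dvd (S : Finset F) (P : MvPolynomial (Fin 3) F)
    (h : ∀ x ∈ S, (X 0 - C x * X 1) ∣ P) :
    (∏ x ∈ S, (X 0 - C x * X 1)) ∣ P := by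
  classical
  induction S using Finset.induction_on generalizing P with
  | empty => simpa using one_dvd P
  | @insert a S' ha ih =>
      obtain ⟨P', hP'⟩ := h a (Finset.mem_insert_self a S')
      rw [Finset.prod_insert ha, hP']
      apply mul_dvd_mul_left
      apply ih
      intro x hx
      have hxP : (X 0 - C x * X 1) ∣ (X 0 - C a * X 1) * P' := by
        rw [← hP']; exact h x (Finset.mem_insert_of_mem hx)
      have hxa : x ≠ a := by rintro rfl; exact ha hx
      rcases (line_prime (show (0:Fin 3) ≠ 1 by decide) x).2.2 _ _ hxP with hd | hd
      · exfalso
        rw [lsub_dvd_iff (show (0:Fin 3) ≠ 1 by decide)] at hd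
        rw [map_sub, lsub_X_self, map_mul, lsub_C,
          lsub_X_ne _ _ _ (show (1:Fin 3) ≠ 0 by decide)] at hd
        have := congrArg (eval (Pi.single 1 (1:F))) hd
        simp [sub_eq_zero] at this
        exact hxa this
      · exact hd

/-- In the degenerate case the Fermat slice splits completely into linear factors,
contradicting the existence of an irreducible factor of degree at least 2. -/
lemma split_case (hq : Fintype.card F = 2*d+1) (hd2 : 2 ≤ d) (hne : (-1:F) ≠ 1)
    {c : F} (hc : c^d = -1) {e2 : F} (he2 : e2^d = -1)
    {Q : MvPolynomial (Fin 3) F} (hQirr : Irreducible Q) (hQdeg : 2 ≤ Q.totalDegree)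
    (hQdvd : Q ∣ fermatSlice F d 0 0 e2) : False := by
  classical
  have hd0 : d ≠ 0 := by omega
  have hm1 : (-1 : F) ≠ 0 := by
    intro h; rw [neg_eq_zero] at h; exact one_ne_zero h
  have hcne : c ≠ 0 := by rintro rfl; rw [zero_pow hd0] at hc; exact hm1 hc.symm
  have hCsplit : fermatSlice F d 0 0 e2 = X 0 ^ d + X 1 ^ d := by
    rw [fermatSlice]
    rw [map_zero, zero_mul, zero_mul, zero_add, zero_add, mul_pow, ← map_pow, he2]
    simp only [map_neg, map_one]
    ring
  rw [hCsplit] at hQdvd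
  -- root counting
  set S : Finset F := Finset.univ.filter (fun x : F => x^d = -1) with hS
  set S1 : Finset F := Finset.univ.filter (fun x : F => x^d = 1) with hS1
  have hcards : S1.card = S.card := by
    apply Finset.card_bij' (fun x _ => c * x) (fun y _ => y / c)
    · intro x hx
      rw [hS1, Finset.mem_filter] at hx
      rw [hS, Finset.mem_filter]
      exact ⟨Finset.mem_univ _, by rw [mul_pow, hc, hx.2, mul_one]⟩
    · intro y hy
      rw [hS, Finset.mem_filter] at hy
      rw [hS1, Finset.mem_filter]
      refine ⟨Finset.mem_univ _, ?_⟩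
      rw [div_pow, hy.2, hc, neg_div_neg_eq, div_one]
    · intro x _; field_simp
    · intro y _; field_simp
  have hdisj : Disjoint S1 S := by
    rw [Finset.disjoint_filter]
    intro x _ h1 h2
    rw [h1] at h2
    exact hne h2.symm
  have hunion : S1 ∪ S = Finset.univ.filter (fun x : F => x ≠ 0) := by
    ext x
    simp only [Finset.mem_union, hS, hS1, Finset.mem_filter, Finset.mem_univ, true_and]
    constructor
    · rintro (h | h) <;> intro h0 <;> rw [h0, zero_pow hd0] at h
      · exact one_ne_zero h.symm
      · exact hm1 h.symm
    · intro hx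
      exact eta_pm hq hx
  have hcard_ne : (Finset.univ.filter (fun x : F => x ≠ 0)).card = 2*d := by
    have : (Finset.univ.filter (fun x : F => x ≠ 0)) = Finset.univ \ {0} := by
      ext x; simp [Finset.mem_sdiff]
    rw [this, Finset.card_sdiff_of_subset (by simp), Finset.card_singleton, Finset.card_univ, hq]
    omega
  have hScard : S.card = d := by
    have := Finset.card_union_of_disjoint hdisj
    rw [hunion, hcard_ne, hcards] at this
    omega
  -- the splitting identity
  have hlinesdvd : ∀ x ∈ S, (X 0 - C x * X 1) ∣ (X 0 ^ d + X 1 ^ d : MvPolynomial (Fin 3) F) := by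
    intro x hx
    rw [hS, Finset.mem_filter] at hx
    rw [lsub_dvd_iff (show (0:Fin 3) ≠ 1 by decide)]
    rw [map_add, map_pow, map_pow, lsub_X_self,
      lsub_X_ne _ _ _ (show (1:Fin 3) ≠ 0 by decide), mul_pow, ← map_pow, hx.2]
    simp only [map_neg, map_one]
    ring
  obtain ⟨R, hR⟩ := prod_lines_dvd S _ hlinesdvd
  -- pass to polynomials over MvPolynomial (Fin 2) F to show R = 1
  set ε := MvPolynomial.finSuccEquiv F 2 with hε
  have hX1 : (X 1 : MvPolynomial (Fin 3) F) = X (Fin.succ 0) := rfl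
  have hεX0 : ε (X 0) = Polynomial.X := finSuccEquiv_X_zero
  have hεX1 : ε (X 1) = Polynomial.C (X 0) := by rw [hX1]; exact finSuccEquiv_X_succ
  have hεC : ∀ a : F, ε (C a) = Polynomial.C (C a) := by
    intro a
    rw [hε, MvPolynomial.finSuccEquiv_apply]
    simp
  have hεu : ε (X 0 ^ d + X 1 ^ d) = Polynomial.X ^ d + Polynomial.C ((X 0 : MvPolynomial (Fin 2) F) ^ d) := by
    rw [map_add, map_pow, map_pow, hεX0, hεX1, ← map_pow]
  have humonic : (Polynomial.X ^ d + Polynomial.C ((X 0 : MvPolynomial (Fin 2) F) ^ d)).Monic :=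
    Polynomial.monic_X_pow_add_C _ hd0
  have hεP : ε (∏ x ∈ S, (X 0 - C x * X 1)) =
      ∏ x ∈ S, (Polynomial.X - Polynomial.C (C x * X 0)) := by
    rw [map_prod]
    apply Finset.prod_congr rfl
    intro x _
    rw [map_sub, map_mul, hεX0, hεX1, hεC, ← Polynomial.C_mul]
  have hPmonic : (∏ x ∈ S, (Polynomial.X - Polynomial.C ((C x * X 0 : MvPolynomial (Fin 2) F)))).Monic :=
    Polynomial.monic_prod_of_monic _ _ (fun x _ => Polynomial.monic_X_sub_C _)
  have hPdeg : (∏ x ∈ S, (Polynomial.X - Polynomial.C ((C x * X 0 : MvPolynomial (Fin 2) F)))).natDegree = d := by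
    rw [Polynomial.natDegree_prod _ _ (fun x _ => (Polynomial.monic_X_sub_C _).ne_zero)]
    have : ∀ x ∈ S, (Polynomial.X - Polynomial.C ((C x * X 0 : MvPolynomial (Fin 2) F))).natDegree = 1 :=
      fun x _ => Polynomial.natDegree_X_sub_C _
    rw [Finset.sum_congr rfl this, Finset.sum_const, smul_eq_mul, mul_one, hScard]
  have hεR := congrArg ε hR
  rw [map_mul, hεu, hεP] at hεR
  have hRne : ε R ≠ 0 := by
    intro h0
    rw [h0, mul_zero] at hεR
    exact humonic.ne_zero hεR
  have hRdeg : (ε R).natDegree = 0 := by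
    have := Polynomial.natDegree_mul hPmonic.ne_zero hRne
    rw [← hεR, Polynomial.natDegree_X_pow_add_C, hPdeg] at this
    omega
  obtain ⟨aR, haR⟩ := Polynomial.natDegree_eq_zero.mp hRdeg
  have haR1 : aR = 1 := by
    have hlc := congrArg Polynomial.leadingCoeff hεR
    rw [humonic.leadingCoeff, Polynomial.leadingCoeff_mul, hPmonic.leadingCoeff, one_mul,
      ← haR, Polynomial.leadingCoeff_C] at hlc
    exact hlc.symm
  have hR1 : R = 1 := by
    apply ε.injective
    rw [map_one, ← haR, haR1, Polynomial.C_1]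
  rw [hR1, mul_one] at hR
  rw [hR] at hQdvd
  have hQprime : Prime Q := UniqueFactorizationMonoid.irreducible_iff_prime.mp hQirr
  obtain ⟨x, _, hQx⟩ := hQprime.exists_mem_finset_dvd hQdvd
  have := dvd_line_totalDegree (show (0:Fin 3) ≠ 1 by decide) x hQirr.not_isUnit hQx
  omega
end S8
namespace S8
variable {F : Type} [Field F] [Fintype F] {d : ℕ}

set_option maxHeartbeats 1000000 in
lemma main (hq : Fintype.card F = 2*d+1) (hd2 : 2 ≤ d) (hne : (-1:F) ≠ 1)
    (hdF : ((d : ℕ) : F) ≠ 0) (hd1F : ((d - 1 : ℕ) : F) ≠ 0)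
    (e0 e1 e2 c : F) (hc : c^d = -1) (he1 : e1 = -(c*e0)) (he2 : e2^d = -1)
    (Q : MvPolynomial (Fin 3) F) (hQirr : Irreducible Q) (hQdeg : 2 ≤ Q.totalDegree)
    (hQdvd : Q ∣ fermatSlice F d e0 e1 e2)
    (v : Fin 3 → F) (hv : v ≠ 0) (hv0 : v 0 = c * v 1) (hQv : eval v Q = 0) : False := by
  classical
  have hd0 : d ≠ 0 := by omega
  have hm1 : (-1 : F) ≠ 0 := by
    intro h; rw [neg_eq_zero] at h; exact one_ne_zero h
  have hcne : c ≠ 0 := by rintro rfl; rw [zero_pow hd0] at hc; exact hm1 hc.symm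
  have he2ne : e2 ≠ 0 := by rintro rfl; rw [zero_pow hd0] at he2; exact hm1 he2.symm
  -- the linear factor ℓ' = X 0 - C c * X 1 divides C
  have hlsubC : lsub 0 1 c (fermatSlice F d e0 e1 e2) = 0 := by
    rw [fermatSlice, map_add, map_add, map_add, map_pow, map_pow, map_pow, map_pow,
      lsub_X_self, lsub_X_ne _ _ _ (show (1:Fin 3) ≠ 0 by decide),
      lsub_X_ne _ _ _ (show (2:Fin 3) ≠ 0 by decide),
      map_add, map_add, map_mul, map_mul, map_mul, lsub_C, lsub_C, lsub_C,
      lsub_X_self, lsub_X_ne _ _ _ (show (1:Fin 3) ≠ 0 by decide),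
      lsub_X_ne _ _ _ (show (2:Fin 3) ≠ 0 by decide)]
    have hinner : C e0 * (C c * X 1) + C e1 * X 1 + C e2 * X 2
        = C e2 * (X 2 : MvPolynomial (Fin 3) F) := by
      rw [he1]; simp only [map_neg, map_mul]; ring
    rw [hinner, mul_pow, mul_pow, ← map_pow, ← map_pow, hc, he2]
    simp only [map_neg, map_one]
    ring
  have hldvd : (X 0 - C c * X 1) ∣ fermatSlice F d e0 e1 e2 :=
    (lsub_dvd_iff (show (0:Fin 3) ≠ 1 by decide) c).mpr hlsubC
  obtain ⟨M, hM⟩ := hldvd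
  have hQp : Prime Q := UniqueFactorizationMonoid.irreducible_iff_prime.mp hQirr
  have hQnotline : ∀ (i j : Fin 3), i ≠ j → ∀ a : F, ¬ Q ∣ (X i - C a * X j) := by
    intro i j hij a hdvd
    have := dvd_line_totalDegree hij a hQirr.not_isUnit hdvd
    omega
  have hQM : Q ∣ M := by
    rcases hQp.2.2 _ _ (hM ▸ hQdvd) with h | h
    · exact absurd h (hQnotline 0 1 (by decide) c)
    · exact h
  have hMv : eval v M = 0 := by
    obtain ⟨N0, hN0⟩ := hQM
    rw [hN0, eval_mul, hQv, zero_mul]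
  have hlv : eval v (X 0 - C c * X 1 : MvPolynomial (Fin 3) F) = 0 := by
    simp [hv0]
  -- partial derivative formula
  set L : MvPolynomial (Fin 3) F := C e0 * X 0 + C e1 * X 1 + C e2 * X 2 with hL
  have hcastd : ((d : ℕ) : MvPolynomial (Fin 3) F) = C ((d:ℕ) : F) :=
    (map_natCast (C : F →+* MvPolynomial (Fin 3) F) d).symm
  have hcastd1 : ((d - 1 : ℕ) : MvPolynomial (Fin 3) F) = C ((d - 1:ℕ) : F) :=
    (map_natCast (C : F →+* MvPolynomial (Fin 3) F) (d-1)).symm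
  have hpdL0 : pderiv 0 L = C e0 := by
    rw [hL]
    simp [pderiv_C_mul, pderiv_X_self, pderiv_X_of_ne (show (1:Fin 3) ≠ 0 by decide),
      pderiv_X_of_ne (show (2:Fin 3) ≠ 0 by decide)]
  have hpdL1 : pderiv 1 L = C e1 := by
    rw [hL]
    simp [pderiv_C_mul, pderiv_X_self, pderiv_X_of_ne (show (0:Fin 3) ≠ 1 by decide),
      pderiv_X_of_ne (show (2:Fin 3) ≠ 1 by decide)]
  have hP0 : pderiv 0 (fermatSlice F d e0 e1 e2)
      = C ((d:ℕ) : F) * X 0 ^ (d-1) + C ((d:ℕ):F) * L ^ (d-1) * C e0 := by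
    rw [fermatSlice, ← hL, map_add, map_add, map_add, pderiv_pow, pderiv_pow, pderiv_pow,
      pderiv_pow, pderiv_X_self, pderiv_X_of_ne (show (1:Fin 3) ≠ 0 by decide),
      pderiv_X_of_ne (show (2:Fin 3) ≠ 0 by decide), hpdL0, hcastd]
    ring
  have hG : pderiv 1 (pderiv 0 (fermatSlice F d e0 e1 e2))
      = C ((d:ℕ):F) * C ((d-1:ℕ):F) * L ^ (d-1-1) * C e1 * C e0 := by
    rw [hP0, map_add, pderiv_C_mul, pderiv_mul, pderiv_C_mul, pderiv_C, pderiv_pow,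
      pderiv_pow, pderiv_X_of_ne (show (0:Fin 3) ≠ 1 by decide), hpdL1, hcastd1]
    ring
  -- value of the linear form at v
  set ξ : F := e0 * v 0 + e1 * v 1 + e2 * v 2 with hξ
  have hevalL : eval v L = ξ := by rw [hL]; simp [hξ]
  have hξe2 : ξ = e2 * v 2 := by rw [hξ, hv0, he1]; ring
  -- key relation from eval of the first derivative
  have hdl0 : pderiv 0 (X 0 - C c * X 1 : MvPolynomial (Fin 3) F) = 1 := by
    simp [pderiv_C_mul, pderiv_X_self, pderiv_X_of_ne (show (1:Fin 3) ≠ 0 by decide)]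
  have hdl1 : pderiv 1 (X 0 - C c * X 1 : MvPolynomial (Fin 3) F) = - C c := by
    simp [pderiv_C_mul, pderiv_X_self, pderiv_X_of_ne (show (0:Fin 3) ≠ 1 by decide)]
  have hD1 : pderiv 0 (fermatSlice F d e0 e1 e2)
      = M + (X 0 - C c * X 1) * pderiv 0 M := by
    rw [hM, pderiv_mul, hdl0, one_mul]
  have hkey : ((d:ℕ):F) * (v 0) ^ (d-1) + ((d:ℕ):F) * ξ ^ (d-1) * e0 = 0 := by
    have h1 := congrArg (eval v) hD1
    rw [hP0] at h1
    simp only [eval_add, eval_mul, eval_C, eval_pow, eval_X, hevalL] at h1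
    rw [hMv, hlv] at h1
    rw [h1]; ring
  have hstar : (v 0) ^ (d-1) = -(e0 * ξ^(d-1)) := by
    have : ((d:ℕ):F) * ((v 0) ^ (d-1) + e0 * ξ^(d-1)) = 0 := by rw [← hkey]; ring
    rcases mul_eq_zero.mp this with h | h
    · exact absurd h hdF
    · linear_combination h
  -- degenerate case e0 = 0
  rcases eq_or_ne e0 0 with he0 | he0
  · have he10 : e1 = 0 := by rw [he1, he0]; ring
    rw [he0, he10] at hQdvd
    exact split_case hq hd2 hne hc he2 hQirr hQdeg hQdvd
  have he1ne : e1 ≠ 0 := by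
    rw [he1]
    intro h
    rw [neg_eq_zero, mul_eq_zero] at h
    tauto
  -- v 2 ≠ 0
  have hv2 : v 2 ≠ 0 := by
    intro h2
    have hξ0 : ξ = 0 := by rw [hξe2, h2, mul_zero]
    rw [hξ0, zero_pow (show d - 1 ≠ 0 by omega), mul_zero, neg_zero] at hstar
    have hv00 : v 0 = 0 := pow_eq_zero_iff (show d - 1 ≠ 0 by omega) |>.mp hstar
    have hv10 : v 1 = 0 := by
      have := hv0
      rw [hv00] at this
      rcases mul_eq_zero.mp this.symm with h | h
      · exact absurd h hcne
      · exact h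
    apply hv
    funext i
    fin_cases i
    · exact hv00
    · exact hv10
    · exact h2
  have hξne : ξ ≠ 0 := by rw [hξe2]; exact mul_ne_zero he2ne hv2
  have hv0ne : v 0 ≠ 0 := by
    intro h0
    rw [h0, zero_pow (show d - 1 ≠ 0 by omega)] at hstar
    have : e0 * ξ^(d-1) = 0 := by linear_combination hstar
    rcases mul_eq_zero.mp this with h | h
    · exact he0 h
    · exact pow_ne_zero _ hξne h
  have hv1ne : v 1 ≠ 0 := by
    intro h1
    rw [h1, mul_zero] at hv0
    exact hv0ne hv0
  -- the sign t
  set t : F := v 0 * e0 / ξ with ht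
  have htne : t ≠ 0 := by
    rw [ht]
    exact div_ne_zero (mul_ne_zero hv0ne he0) hξne
  have htd1 : t ^ (d-1) = -(e0^d) := by
    have h1 : t ^ (d-1) * ξ ^ (d-1) = (v 0)^(d-1) * e0^(d-1) := by
      rw [ht, div_pow, mul_pow]
      field_simp
    rw [hstar] at h1
    have h2 : t ^ (d-1) * ξ ^ (d-1) = -(e0^d) * ξ^(d-1) := by
      have hps : e0 * e0 ^ (d-1) = e0 ^ d := by
        rw [← pow_succ']
        congr 1
        omega
      rw [h1]
      linear_combination (-(ξ^(d-1))) * hps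
    exact mul_right_cancel₀ (pow_ne_zero _ hξne) h2
  have ht2 : t ^ 2 = 1 := by
    have h2d : t ^ (2*d) = 1 := pow2d hq htne
    have h2d2 : t ^ (2*(d-1)) * t ^ 2 = t ^ (2*d) := by
      rw [← pow_add]
      congr 1
      omega
    have he02d : t ^ (2*(d-1)) = 1 := by
      rw [two_mul, pow_add, htd1]
      have : e0 ^ (2*d) = 1 := pow2d hq he0
      rw [neg_mul_neg, ← pow_add]
      rw [show d + d = 2*d by ring, this]
    rw [he02d, one_mul] at h2d2
    rw [h2d2, h2d]
  have htpm : t = 1 ∨ t = -1 := by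
    have : (t - 1) * (t + 1) = 0 := by linear_combination ht2
    rcases mul_eq_zero.mp this with h | h
    · left; linear_combination h
    · right; linear_combination h
  -- find the second line through v dividing C
  obtain ⟨i2, j2, a2, hij2, hl2dvd, hl2v, hl2nl⟩ :
      ∃ (i2 j2 : Fin 3) (a2 : F), i2 ≠ j2 ∧
        (X i2 - C a2 * X j2) ∣ fermatSlice F d e0 e1 e2 ∧
        eval v (X i2 - C a2 * X j2 : MvPolynomial (Fin 3) F) = 0 ∧
        ¬ (X i2 - C a2 * X j2) ∣ (X 0 - C c * X 1 : MvPolynomial (Fin 3) F) := by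
    have hCsq : ((-1:F)^d) * ((-1:F)^d) = 1 := by
      rw [← pow_add, show d + d = 2*d by ring]
      rw [show ((-1:F))^(2*d) = (((-1:F))^2)^d by rw [← pow_mul]]
      norm_num
    rcases htpm with ht1 | ht1
    · -- t = 1 : second line is X 1 - C c3 * X 2
      have hv0e0 : v 0 * e0 = ξ := by
        have h' : v 0 * e0 / ξ = 1 := by rw [← ht]; exact ht1
        rw [div_eq_iff hξne, one_mul] at h'
        exact h'
      have he0d : e0 ^ d = -1 := by
        rw [ht1] at htd1
        rw [one_pow] at htd1
        linear_combination htd1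
      set c3 : F := -(e2/e1) with hc3
      have hsub3 : e1 * c3 + e2 = 0 := by
        rw [hc3]; field_simp; try ring
      have he1d : e1 ^ d = (-1:F)^d := by
        rw [he1, neg_pow, mul_pow, hc, he0d]
        ring
      have hpn : ((-1:F))^d ≠ 0 := by
        intro h; rw [h, mul_zero] at hCsq; exact one_ne_zero hCsq.symm
      have hc3d : c3 ^ d = -1 := by
        rw [hc3, neg_pow, div_pow, he2, he1d,
          mul_comm (((-1:F))^d) ((-1:F) / ((-1:F))^d),
          div_mul_eq_mul_div, mul_div_assoc, div_self hpn, mul_one]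
      refine ⟨1, 2, c3, by decide, ?_, ?_, ?_⟩
      · rw [lsub_dvd_iff (show (1:Fin 3) ≠ 2 by decide)]
        rw [fermatSlice, map_add, map_add, map_add, map_pow, map_pow, map_pow, map_pow,
          lsub_X_self, lsub_X_ne _ _ _ (show (0:Fin 3) ≠ 1 by decide),
          lsub_X_ne _ _ _ (show (2:Fin 3) ≠ 1 by decide),
          map_add, map_add, map_mul, map_mul, map_mul, lsub_C, lsub_C, lsub_C,
          lsub_X_self, lsub_X_ne _ _ _ (show (0:Fin 3) ≠ 1 by decide),
          lsub_X_ne _ _ _ (show (2:Fin 3) ≠ 1 by decide)]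
        have hinner : C e0 * X 0 + C e1 * (C c3 * X 2) + C e2 * X 2
            = C e0 * (X 0 : MvPolynomial (Fin 3) F) := by
          have h1 : C e1 * (C c3 * X 2) + C e2 * X 2 = (0 : MvPolynomial (Fin 3) F) := by
            have h2 : C e1 * (C c3 * X 2) + C e2 * X 2
                = C (e1 * c3 + e2) * (X 2 : MvPolynomial (Fin 3) F) := by
              rw [map_add, map_mul]; ring
            rw [h2, hsub3, map_zero, zero_mul]
          rw [add_assoc, h1, add_zero]
        rw [hinner, mul_pow, mul_pow, ← map_pow, ← map_pow, hc3d, he0d]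
        simp only [map_neg, map_one]
        ring
      · have h2 : c * v 1 * e0 = e2 * v 2 := by
          rw [← hv0, hv0e0, hξe2]
        have hv12 : v 1 = c3 * v 2 := by
          rw [hc3, neg_mul, eq_comm, neg_eq_iff_eq_neg, div_mul_eq_mul_div,
            div_eq_iff he1ne]
          linear_combination v 1 * he1 - h2
        simp [hv12]
      · rw [lsub_dvd_iff (show (1:Fin 3) ≠ 2 by decide)]
        rw [map_sub, map_mul, lsub_C, lsub_X_ne _ _ _ (show (0:Fin 3) ≠ 1 by decide), lsub_X_self]
        intro h
        have := congrArg (eval (Pi.single 0 1)) h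
        simp [Pi.single_apply] at this
    · -- t = -1 : second line is X 0 - C c2 * X 2
      have hv0e0 : v 0 * e0 = -ξ := by
        have h' : v 0 * e0 / ξ = -1 := by rw [← ht]; exact ht1
        rw [div_eq_iff hξne] at h'
        rw [h']; ring
      have he0d : e0 ^ d = (-1:F)^d := by
        rw [ht1] at htd1
        have hpow : (-1:F) ^ (d-1) * (-1:F) = (-1:F)^d := by
          rw [← pow_succ]
          congr 1
          omega
        have : (-1:F)^d = -(-1:F)^(d-1) := by rw [← hpow]; ring
        rw [this, htd1]
        ring
      set c2 : F := -(e2/e0) with hc2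
      have hsub2 : e0 * c2 + e2 = 0 := by
        rw [hc2]; field_simp; try ring
      have he1d : e1 ^ d = -1 := by
        rw [he1, neg_pow, mul_pow, hc, he0d]
        linear_combination -hCsq
      have hpn : ((-1:F))^d ≠ 0 := by
        intro h; rw [h, mul_zero] at hCsq; exact one_ne_zero hCsq.symm
      have hc2d : c2 ^ d = -1 := by
        rw [hc2, neg_pow, div_pow, he2, he0d,
          mul_comm (((-1:F))^d) ((-1:F) / ((-1:F))^d),
          div_mul_eq_mul_div, mul_div_assoc, div_self hpn, mul_one]
      refine ⟨0, 2, c2, by decide, ?_, ?_, ?_⟩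
      · rw [lsub_dvd_iff (show (0:Fin 3) ≠ 2 by decide)]
        rw [fermatSlice, map_add, map_add, map_add, map_pow, map_pow, map_pow, map_pow,
          lsub_X_self, lsub_X_ne _ _ _ (show (1:Fin 3) ≠ 0 by decide),
          lsub_X_ne _ _ _ (show (2:Fin 3) ≠ 0 by decide),
          map_add, map_add, map_mul, map_mul, map_mul, lsub_C, lsub_C, lsub_C,
          lsub_X_self, lsub_X_ne _ _ _ (show (1:Fin 3) ≠ 0 by decide),
          lsub_X_ne _ _ _ (show (2:Fin 3) ≠ 0 by decide)]
        have hinner : C e0 * (C c2 * X 2) + C e1 * X 1 + C e2 * X 2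
            = C e1 * (X 1 : MvPolynomial (Fin 3) F) := by
          have h1 : C e0 * (C c2 * X 2) + C e2 * X 2
              = C (e0 * c2 + e2) * (X 2 : MvPolynomial (Fin 3) F) := by
            rw [map_add, map_mul]; ring
          have h2 : C e0 * (C c2 * X 2) + C e1 * X 1 + C e2 * X 2
              = (C e0 * (C c2 * X 2) + C e2 * X 2) + C e1 * (X 1 : MvPolynomial (Fin 3) F) := by
            ring
          rw [h2, h1, hsub2, map_zero, zero_mul, zero_add]
        rw [hinner, mul_pow, mul_pow, ← map_pow, ← map_pow, hc2d, he1d]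
        simp only [map_neg, map_one]
        ring
      · have h2 : v 0 * e0 = -(e2 * v 2) := by rw [hv0e0, hξe2]
        have hv02 : v 0 = c2 * v 2 := by
          rw [hc2, neg_mul, eq_comm, neg_eq_iff_eq_neg, div_mul_eq_mul_div,
            div_eq_iff he0]
          linear_combination h2
        simp [hv02]
      · rw [lsub_dvd_iff (show (0:Fin 3) ≠ 2 by decide)]
        rw [map_sub, map_mul, lsub_C, lsub_X_ne _ _ _ (show (1:Fin 3) ≠ 0 by decide), lsub_X_self]
        intro h
        have := congrArg (eval (Pi.single 1 1)) h
        simp [Pi.single_apply] at this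
        exact hcne this
  -- factor C = ℓ' * ℓ2 * Q * R
  have hl2p : Prime (X i2 - C a2 * X j2 : MvPolynomial (Fin 3) F) := line_prime hij2 a2
  have hl2M : (X i2 - C a2 * X j2) ∣ M := by
    rcases hl2p.2.2 _ _ (hM ▸ hl2dvd) with h | h
    · exact absurd h hl2nl
    · exact h
  obtain ⟨N, hN⟩ := hl2M
  have hQN : Q ∣ N := by
    have hQl2 : ¬ Q ∣ (X i2 - C a2 * X j2) := hQnotline i2 j2 hij2 a2
    have : Q ∣ (X i2 - C a2 * X j2) * N := hN ▸ hQM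
    rcases hQp.2.2 _ _ this with h | h
    · exact absurd h hQl2
    · exact h
  obtain ⟨R, hR⟩ := hQN
  have hMfact : M = (X i2 - C a2 * X j2) * (Q * R) := by rw [hN, hR]
  -- evaluations of derivatives of M vanish at v
  have hMd : ∀ i : Fin 3, eval v (pderiv i M) = 0 := by
    intro i
    rw [hMfact, pderiv_mul]
    simp only [eval_add, eval_mul]
    rw [hl2v, pderiv_mul]
    simp only [eval_add, eval_mul]
    rw [hQv]
    ring
  -- the second derivative of C vanishes at v ...
  have hGzero : eval v (pderiv 1 (pderiv 0 (fermatSlice F d e0 e1 e2))) = 0 := by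
    rw [hD1, map_add, pderiv_mul, hdl1]
    simp only [eval_add, eval_mul, eval_neg, eval_C]
    rw [hMd 0, hMd 1, hlv]
    ring
  -- ... but is explicitly nonzero
  rw [hG] at hGzero
  simp only [eval_mul, eval_C, eval_pow, hevalL] at hGzero
  have : ((d:ℕ):F) * ((d-1:ℕ):F) * ξ^(d-1-1) * e1 * e0 ≠ 0 := by
    apply mul_ne_zero
    apply mul_ne_zero
    apply mul_ne_zero
    apply mul_ne_zero hdF hd1F
    · exact pow_ne_zero _ hξne
    · exact he1ne
    · exact he0
  exact this hGzero

end S8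
namespace S8
variable {F : Type} [Field F] [Fintype F] {d : ℕ}

lemma fermat_sum (d : ℕ) (e : Fin 3 → F) :
    fermatSlice F d (e 0) (e 1) (e 2)
      = (∑ m : Fin 3, X m ^ d) + (∑ m : Fin 3, C (e m) * X m) ^ d := by
  rw [fermatSlice, Fin.sum_univ_three, Fin.sum_univ_three]

end S8


open S8

/-- If `ℓ` is a nonzero linear form dividing `C` and `Q` is an irreducible
factor of `C` of degree at least `2`, then no point of `ℙ²(F_q)` (i.e. no nonzero triple
over `F_q`, up to scalars) lies on both `ℓ = 0` and `Q = 0`: the union of the linear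
components of the curve `C = 0` is `F_q`-disjoint from its remaining components. -/
theorem statement8 (p h : ℕ) (hp : Nat.Prime p) (hp3 : 3 < p) (hh : 0 < h)
    (F : Type) [Field F] [Fintype F] (hcard : Fintype.card F = p ^ h)
    (d : ℕ) (hd : p ^ h = 2 * d + 1) (e0 e1 e2 : F)
    (ℓ : MvPolynomial (Fin 3) F) (hl0 : ℓ ≠ 0) (hlin : ℓ.IsHomogeneous 1)
    (hldvd : ℓ ∣ fermatSlice F d e0 e1 e2)
    (Q : MvPolynomial (Fin 3) F) (hQirr : Irreducible Q) (hQdeg : 2 ≤ Q.totalDegree)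
    (hQdvd : Q ∣ fermatSlice F d e0 e1 e2) :
    ¬ ∃ v : Fin 3 → F, v ≠ 0 ∧ MvPolynomial.eval v ℓ = 0 ∧ MvPolynomial.eval v Q = 0 := by
  classical
  rintro ⟨v, hv, hlv, hQv⟩
  -- numeric facts
  have hp5 : 5 ≤ p := by
    by_contra h5
    have : p = 4 := by omega
    rw [this] at hp
    exact absurd hp (by decide)
  have hd2 : 2 ≤ d := by
    have h1 : p ≤ p ^ h := Nat.le_self_pow (by omega) p
    omega
  have hq : Fintype.card F = 2*d+1 := by rw [hcard, hd]
  have hd0 : d ≠ 0 := by omega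
  -- characteristic
  have hchar := ringChar.charP F
  have hrdvd : ringChar F ∣ p^h := by
    rw [← CharP.cast_eq_zero_iff F (ringChar F)]
    rw [← hcard]
    exact Nat.cast_card_eq_zero F
  have hrP : (ringChar F).Prime := CharP.char_is_prime F (ringChar F)
  have hrp : ringChar F = p :=
    (Nat.prime_dvd_prime_iff_eq hrP hp).mp (hrP.dvd_of_dvd_pow hrdvd)
  have hchp : CharP F p := by rw [← hrp]; exact hchar
  have hch : ∀ n : ℤ, n.natAbs ≤ 4 → (n:F) = 0 → n = 0 := by
    intro n hn h0
    rw [CharP.intCast_eq_zero_iff F p] at h0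
    by_contra hn0
    have habs : (p:ℤ) ∣ (n.natAbs : ℤ) := Int.dvd_natAbs.mpr h0
    have hle := Int.le_of_dvd (by omega) habs
    have : (5:ℤ) ≤ (p:ℤ) := by exact_mod_cast hp5
    omega
  have hne : (-1:F) ≠ 1 := by
    intro hcontr
    have h2 : ((2:ℤ):F) = 0 := by push_cast; linear_combination -hcontr
    have := hch 2 (by norm_num) h2
    norm_num at this
  have hcard0 : ((2*d+1 : ℕ) : F) = 0 := by rw [← hq]; exact Nat.cast_card_eq_zero F
  have hcard0' : (2:F) * ((d:ℕ):F) + 1 = 0 := by push_cast at hcard0; linear_combination hcard0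
  have hdF : ((d : ℕ) : F) ≠ 0 := by
    intro h0
    rw [h0, mul_zero, zero_add] at hcard0'
    exact one_ne_zero hcard0'
  have hd1F : ((d - 1 : ℕ) : F) ≠ 0 := by
    have hcast : ((d - 1 : ℕ) : F) = ((d:ℕ):F) - 1 := by
      have : (1:ℕ) ≤ d := by omega
      push_cast [Nat.cast_sub this]
      ring
    rw [hcast]
    intro h0
    have hd1 : ((d:ℕ):F) = 1 := by linear_combination h0
    have h3 : ((3:ℤ):F) = 0 := by
      push_cast
      rw [hd1] at hcard0'
      linear_combination hcard0'
    have := hch 3 (by norm_num) h3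
    norm_num at this
  -- classify the linear factor
  set e : Fin 3 → F := ![e0, e1, e2] with he
  have hldvd' : ℓ ∣ fermatSlice F d (e 0) (e 1) (e 2) := by
    simpa [he] using hldvd
  obtain ⟨i, j, k, c, u, hij, hik, hjk, hu, hleq, hcd, hej, hek⟩ :=
    classify hq hd0 hne hch e hl0 hlin hldvd'
  -- build the permutation
  have hbij : Function.Bijective ![i, j, k] := by
    apply Finite.injective_iff_bijective.mp
    intro a b hab
    fin_cases a <;> fin_cases b <;> simp_all <;>
      first
        | rfl
        | exact absurd hab hij
        | exact absurd hab hik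
        | exact absurd hab hjk
        | exact absurd hab.symm hij
        | exact absurd hab.symm hik
        | exact absurd hab.symm hjk
  set σ : Equiv.Perm (Fin 3) := Equiv.ofBijective _ hbij with hσ
  have hσ0 : σ 0 = i := rfl
  have hσ1 : σ 1 = j := rfl
  have hσ2 : σ 2 = k := rfl
  set e' : Fin 3 → F := e ∘ σ with he'
  have he'0 : e' 0 = e i := by rw [he', Function.comp_apply, hσ0]
  have he'1 : e' 1 = e j := by rw [he', Function.comp_apply, hσ1]
  have he'2 : e' 2 = e k := by rw [he', Function.comp_apply, hσ2]
  have key : rename (⇑σ) (fermatSlice F d (e i) (e j) (e k)) = fermatSlice F d (e 0) (e 1) (e 2) := by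
    rw [← he'0, ← he'1, ← he'2, fermat_sum d e', fermat_sum d e]
    rw [map_add, map_pow, map_sum, map_sum]
    congr 1
    · have : ∀ m : Fin 3, rename (⇑σ) ((X m : MvPolynomial (Fin 3) F) ^ d) = X (σ m) ^ d := by
        intro m; rw [map_pow, rename_X]
      rw [Finset.sum_congr rfl (fun m _ => this m)]
      exact Equiv.sum_comp σ (fun m => (X m : MvPolynomial (Fin 3) F) ^ d)
    · congr 1
      have : ∀ m : Fin 3, rename (⇑σ) (C (e' m) * (X m : MvPolynomial (Fin 3) F))
          = C (e (σ m)) * X (σ m) := by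
        intro m; rw [map_mul, rename_C, rename_X, he', Function.comp_apply]
      rw [Finset.sum_congr rfl (fun m _ => this m)]
      exact Equiv.sum_comp σ (fun m => C (e m) * (X m : MvPolynomial (Fin 3) F))
  set ρ : MvPolynomial (Fin 3) F ≃ₐ[F] MvPolynomial (Fin 3) F := MvPolynomial.renameEquiv F σ with hρ
  have hρapp : ∀ P : MvPolynomial (Fin 3) F, ρ P = rename (⇑σ) P := fun _ => rfl
  have hρsymm : ∀ P : MvPolynomial (Fin 3) F, ρ.symm P = rename (⇑σ.symm) P := by
    intro P
    rw [hρ, MvPolynomial.renameEquiv_symm]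
    rfl
  set Q' : MvPolynomial (Fin 3) F := ρ.symm Q with hQ'
  have hQQ' : ρ Q' = Q := ρ.apply_symm_apply Q
  have hQ'dvd : Q' ∣ fermatSlice F d (e i) (e j) (e k) := by
    have h1 : ρ.symm (fermatSlice F d (e 0) (e 1) (e 2)) = fermatSlice F d (e i) (e j) (e k) := by
      rw [← key, ← hρapp]
      exact ρ.symm_apply_apply _
    have h2 : Q' ∣ ρ.symm (fermatSlice F d (e 0) (e 1) (e 2)) := by
      apply map_dvd ρ.symm
      simpa [he] using hQdvd
    rwa [h1] at h2
  have hQ'irr : Irreducible Q' := (MulEquiv.irreducible_iff (ρ.symm : MvPolynomial (Fin 3) F ≃ₐ[F] MvPolynomial (Fin 3) F)).mpr hQirr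
  have hQ'deg : 2 ≤ Q'.totalDegree := by
    have h1 : Q.totalDegree ≤ Q'.totalDegree := by
      conv_lhs => rw [← hQQ', hρapp]
      exact totalDegree_rename_le _ _
    omega
  set v' : Fin 3 → F := v ∘ σ with hv'
  have hv'ne : v' ≠ 0 := by
    intro h0
    apply hv
    funext m
    have := congrFun h0 (σ.symm m)
    simpa [hv', Equiv.apply_symm_apply] using this
  have hvij : v i = c * v j := by
    rw [hleq] at hlv
    simp only [eval_mul, eval_sub, eval_C, eval_X] at hlv
    rcases mul_eq_zero.mp hlv with h0 | h0
    · exact absurd h0 hu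
    · linear_combination h0
  have hv'0 : v' 0 = c * v' 1 := by
    rw [hv']
    simp only [Function.comp_apply, hσ0, hσ1]
    exact hvij
  have hQ'v : eval v' Q' = 0 := by
    rw [hQ', hρsymm, eval_rename]
    have : v' ∘ ⇑σ.symm = v := by
      funext m
      simp [hv', Equiv.apply_symm_apply]
    rw [this, hQv]
  exact main hq hd2 hne hdF hd1F (e i) (e j) (e k) c hcd hej hek Q' hQ'irr hQ'deg hQ'dvd
    v' hv'ne hv'0 hQ'v
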